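/- If the twisted-cube support C(c,ℓ) is closed in ℝ^n, then m_σ ∈ C(c,ℓ) for every sign vector σ ∈ {+,−}^n. -/

import Mathlib

/-- The affine functions `A_j(x) = ℓ_j − Σ_{k>j} c_{jk} x_k` (for the top index the sum
is empty so `A_n = ℓ_n`). Indices are 0-based via `Fin n`. -/
def Afun (n : ℕ) (c : Fin n → Fin n → ℤ) (L : Fin n → ℤ) (j : Fin n) (x : Fin n → ℝ) : ℝ :=
  (L j : ℝ) - ∑ k ∈ Finset.univ.filter (fun k => j < k), (c j k : ℝ) * x k

/-- Condition (S-k): `A_k(x) < x_k < 0` or `0 ≤ x_k ≤ A_k(x)`. -/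
def Scond (n : ℕ) (c : Fin n → Fin n → ℤ) (L : Fin n → ℤ) (k : Fin n) (x : Fin n → ℝ) : Prop :=
  (Afun n c L k x < x k ∧ x k < 0) ∨ (0 ≤ x k ∧ x k ≤ Afun n c L k x)

/-- The twisted-cube support `C(c,ℓ)`. -/
def Cset (n : ℕ) (c : Fin n → Fin n → ℤ) (L : Fin n → ℤ) : Set (Fin n → ℝ) :=
  {x | ∀ k, Scond n c L k x}

/-- The polytope `P(c,ℓ) = {x : 0 ≤ x_j ≤ A_j(x) for all j}`. -/
def Pset (n : ℕ) (c : Fin n → Fin n → ℤ) (L : Fin n → ℤ) : Set (Fin n → ℝ) :=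
  {x | ∀ j, 0 ≤ x j ∧ x j ≤ Afun n c L j x}

/-- Condition (P): for each `k`, whenever the coordinates above `k` satisfy
`0 ≤ x_j ≤ A_j(x)`, one has `A_k(x) ≥ 0`. (For the top index this says `ℓ_n ≥ 0`.) -/
def CondP (n : ℕ) (c : Fin n → Fin n → ℤ) (L : Fin n → ℤ) : Prop :=
  ∀ k : Fin n, ∀ x : Fin n → ℝ,
    (∀ j : Fin n, k < j → 0 ≤ x j ∧ x j ≤ Afun n c L j x) →
    0 ≤ Afun n c L k x

/-- The Cartier data `m_σ` for a sign vector `σ` (`true` = `+`, `false` = `−`), defined by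
downward recursion: `m_{σ,j} = 0` if `σ_j = +`, and `m_{σ,j} = A_j(m_σ)` if `σ_j = −`. -/
noncomputable def mvec (n : ℕ) (c : Fin n → Fin n → ℤ) (L : Fin n → ℤ)
    (σ : Fin n → Bool) (j : Fin n) : ℝ :=
  if σ j then 0
  else (L j : ℝ) - ∑ k ∈ (Finset.univ.filter (fun k => j < k)).attach,
      (c j k.1 : ℝ) * mvec n c L σ k.1
termination_by n - j.1
decreasing_by
  have hk := Fin.lt_iff_val_lt_val.mp (Finset.mem_filter.mp k.2).2
  have := k.1.isLt
  omega

lemma Afun_congr (n : ℕ) (c : Fin n → Fin n → ℤ) (L : Fin n → ℤ) (j : Fin n)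
    (x y : Fin n → ℝ) (hxy : ∀ k, j < k → x k = y k) :
    Afun n c L j x = Afun n c L j y := by
  unfold Afun
  congr 1
  refine Finset.sum_congr rfl fun k hk => ?_
  rw [hxy k (Finset.mem_filter.mp hk).2]

lemma mvec_eq (n : ℕ) (c : Fin n → Fin n → ℤ) (L : Fin n → ℤ) (σ : Fin n → Bool) (j : Fin n) :
    mvec n c L σ j = if σ j then 0 else Afun n c L j (mvec n c L σ) := by
  rw [mvec]
  congr 1
  unfold Afun
  congr 1
  exact Finset.sum_attach _ fun k => (c j k : ℝ) * mvec n c L σ k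

/-- Perturbation family: above `k`, equals `mvec σ`; at `k`, equals `t`;
below `k`, equals `min (A_j) 0 / 2`. -/
noncomputable def yfun (n : ℕ) (c : Fin n → Fin n → ℤ) (L : Fin n → ℤ) (k : Fin n)
    (σ : Fin n → Bool) (t : ℝ) (j : Fin n) : ℝ :=
  if k < j then mvec n c L σ j
  else if j = k then t
  else min ((L j : ℝ) - ∑ i ∈ (Finset.univ.filter (fun i => j < i)).attach,
      (c j i.1 : ℝ) * yfun n c L k σ t i.1) 0 / 2
termination_by n - j.1
decreasing_by
  have hk := Fin.lt_iff_val_lt_val.mp (Finset.mem_filter.mp i.2).2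
  have := i.1.isLt
  omega

lemma yfun_gt (n : ℕ) (c : Fin n → Fin n → ℤ) (L : Fin n → ℤ) (k : Fin n)
    (σ : Fin n → Bool) (t : ℝ) (j : Fin n) (hj : k < j) :
    yfun n c L k σ t j = mvec n c L σ j := by
  rw [yfun, if_pos hj]

lemma yfun_k (n : ℕ) (c : Fin n → Fin n → ℤ) (L : Fin n → ℤ) (k : Fin n)
    (σ : Fin n → Bool) (t : ℝ) :
    yfun n c L k σ t k = t := by
  rw [yfun, if_neg (lt_irrefl k), if_pos rfl]

lemma yfun_lt (n : ℕ) (c : Fin n → Fin n → ℤ) (L : Fin n → ℤ) (k : Fin n)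
    (σ : Fin n → Bool) (t : ℝ) (j : Fin n) (hj : j < k) :
    yfun n c L k σ t j = min (Afun n c L j (yfun n c L k σ t)) 0 / 2 := by
  rw [yfun, if_neg (by exact fun h => absurd hj (not_lt.mpr h.le)), if_neg hj.ne]
  congr 2
  unfold Afun
  congr 1
  exact Finset.sum_attach _ fun i => (c j i : ℝ) * yfun n c L k σ t i

lemma yfun_cont (n : ℕ) (c : Fin n → Fin n → ℤ) (L : Fin n → ℤ) (k : Fin n)
    (σ : Fin n → Bool) (j : Fin n) :
    Continuous (fun t => yfun n c L k σ t j) := by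
  rcases lt_trichotomy j k with hj | hj | hj
  · have : (fun t => yfun n c L k σ t j)
        = fun t => min ((L j : ℝ) - ∑ i ∈ (Finset.univ.filter (fun i => j < i)).attach,
            (c j i.1 : ℝ) * yfun n c L k σ t i.1) 0 / 2 := by
      funext t
      rw [yfun_lt n c L k σ t j hj]
      unfold Afun
      congr 3
      exact (Finset.sum_attach _ fun i => (c j i : ℝ) * yfun n c L k σ t i).symm
    rw [this]
    refine Continuous.div_const (Continuous.min ?_ continuous_const) 2
    refine Continuous.sub continuous_const ?_
    refine continuous_finset_sum _ fun i _ => ?_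
    exact Continuous.mul continuous_const (yfun_cont n c L k σ i.1)
  · subst hj
    simpa [yfun_k] using continuous_id'
  · have : (fun t => yfun n c L k σ t j) = fun _ => mvec n c L σ j := by
      funext t; exact yfun_gt n c L k σ t j hj
    rw [this]; exact continuous_const
termination_by n - j.1
decreasing_by
  have hk := Fin.lt_iff_val_lt_val.mp (Finset.mem_filter.mp i.2).2
  have := i.1.isLt
  omega

lemma Afun_yfun (n : ℕ) (c : Fin n → Fin n → ℤ) (L : Fin n → ℤ) (k : Fin n)
    (σ : Fin n → Bool) (t : ℝ) (j : Fin n) (hj : k ≤ j) :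
    Afun n c L j (yfun n c L k σ t) = Afun n c L j (mvec n c L σ) := by
  refine Afun_congr n c L j _ _ fun i hi => ?_
  exact yfun_gt n c L k σ t i (lt_of_le_of_lt hj hi)

lemma yfun_mem (n : ℕ) (c : Fin n → Fin n → ℤ) (L : Fin n → ℤ) (k : Fin n)
    (σ : Fin n → Bool)
    (hIH : ∀ j : Fin n, k < j → 0 ≤ Afun n c L j (mvec n c L σ))
    (t : ℝ) (h1 : Afun n c L k (mvec n c L σ) < t) (h2 : t < 0) :
    yfun n c L k σ t ∈ Cset n c L := by
  intro j
  rcases lt_trichotomy j k with hj | hj | hj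
  · rw [Scond, yfun_lt n c L k σ t j hj]
    set a := Afun n c L j (yfun n c L k σ t) with ha
    rcases le_or_gt 0 a with h0 | h0
    · right
      rw [min_eq_right h0]
      norm_num [h0]
    · left
      rw [min_eq_left h0.le]
      constructor <;> linarith
  · subst hj
    rw [Scond, yfun_k, Afun_yfun n c L j σ t j le_rfl]
    left
    exact ⟨h1, h2⟩
  · rw [Scond, yfun_gt n c L k σ t j hj, Afun_yfun n c L k σ t j hj.le]
    right
    have ha := hIH j hj
    rw [mvec_eq n c L σ j]
    by_cases hσ : σ j <;> simp [hσ, ha]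

lemma yfun_zero_not_mem (n : ℕ) (c : Fin n → Fin n → ℤ) (L : Fin n → ℤ) (k : Fin n)
    (σ : Fin n → Bool) (hA : Afun n c L k (mvec n c L σ) < 0) :
    yfun n c L k σ 0 ∉ Cset n c L := by
  intro hmem
  have h := hmem k
  rw [Scond, yfun_k, Afun_yfun n c L k σ 0 k le_rfl] at h
  rcases h with ⟨_, h⟩ | ⟨_, h⟩ <;> linarith

lemma key (n : ℕ) (c : Fin n → Fin n → ℤ) (L : Fin n → ℤ) (h : IsClosed (Cset n c L)) :
    ∀ d : ℕ, ∀ k : Fin n, n - k.1 ≤ d → ∀ σ : Fin n → Bool,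
      0 ≤ Afun n c L k (mvec n c L σ) := by
  intro d
  induction d with
  | zero => intro k hk; have := k.isLt; omega
  | succ d ih =>
    intro k hk σ
    by_contra hA
    push_neg at hA
    have hIH : ∀ j : Fin n, k < j → 0 ≤ Afun n c L j (mvec n c L σ) := by
      intro j hj
      have : n - j.1 ≤ d := by
        have := Fin.lt_iff_val_lt_val.mp hj
        have := j.isLt
        omega
      exact ih j this σ
    set A := Afun n c L k (mvec n c L σ) with hAdef
    -- the sequence
    set u : ℕ → (Fin n → ℝ) := fun m => yfun n c L k σ (A / (m + 2)) with hu
    have humem : ∀ m, u m ∈ Cset n c L := by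
      intro m
      refine yfun_mem n c L k σ hIH _ ?_ ?_
      · rw [lt_div_iff₀ (by positivity : (0:ℝ) < (m:ℝ) + 2)]
        nlinarith [Nat.cast_nonneg (α := ℝ) m]
      · apply div_neg_of_neg_of_pos hA
        positivity
    have hs : Filter.Tendsto (fun m : ℕ => A / (m + 2)) Filter.atTop (nhds 0) := by
      have h2 : Filter.Tendsto (fun m : ℕ => (m : ℝ) + 2) Filter.atTop Filter.atTop :=
        Filter.tendsto_atTop_add_const_right _ 2 tendsto_natCast_atTop_atTop
      exact Filter.Tendsto.div_atTop tendsto_const_nhds h2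
    have hlim : Filter.Tendsto u Filter.atTop (nhds (yfun n c L k σ 0)) := by
      rw [tendsto_pi_nhds]
      intro j
      exact ((yfun_cont n c L k σ j).tendsto 0).comp hs
    exact yfun_zero_not_mem n c L k σ hA
      (h.mem_of_tendsto hlim (Filter.Eventually.of_forall humem))


/-- if `C(c,ℓ)` is closed then `m_σ ∈ C(c,ℓ)` for every sign vector `σ`. -/
theorem mvec_mem_Cset_of_isClosed (n : ℕ) (hn : 0 < n)
    (c : Fin n → Fin n → ℤ) (L : Fin n → ℤ)
    (h : IsClosed (Cset n c L)) :
    ∀ σ : Fin n → Bool, mvec n c L σ ∈ Cset n c L := by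

  intro σ k
  have hA : 0 ≤ Afun n c L k (mvec n c L σ) := key n c L h n k (by omega) σ
  rw [Scond, mvec_eq n c L σ k]
  right
  by_cases hσ : σ k <;> simp [hσ, hA]
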